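/- arXiv:2401.12321 — 4 statements merged into one kernel-verified Lean document; each statement's English description precedes it below -/
import Mathlib

section
/- Let O₁ : H → H be γ₁-averaged and O₂ : H → H be γ₂-averaged with γ₁, γ₂ ∈ (0,1). Then the composition O₂ ∘ O₁ is γ-averaged with γ = 1/(1 + 1/(γ₁/(1−γ₁) + γ₂/(1−γ₂))) = (γ₁ + γ₂ − 2γ₁γ₂)/(1 − γ₁γ₂). -/
open RealInnerProductSpace

/-- `O` is `γ`-averaged: `O = (1-γ)•Id + γ•N` with `N` nonexpansive. -/
def IsAveraged {H : Type*} [NormedAddCommGroup H] [InnerProductSpace ℝ H]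
    (γ : ℝ) (O : H → H) : Prop :=
  ∃ N : H → H, LipschitzWith 1 N ∧ ∀ x, O x = (1 - γ) • x + γ • N x

lemma avg_key_identity {H : Type*} [NormedAddCommGroup H] [InnerProductSpace ℝ H]
    (α : ℝ) (u v : H) :
    ‖(1-α)•u + α•v‖^2 = (1-α)*‖u‖^2 + α*‖v‖^2 - α*(1-α)*‖u-v‖^2 := by
  simp only [← real_inner_self_eq_norm_sq, inner_add_left, inner_add_right,
    inner_sub_left, inner_sub_right, real_inner_smul_left, real_inner_smul_right,
    real_inner_comm u v]
  ring

lemma avg_ineq {H : Type*} [NormedAddCommGroup H] [InnerProductSpace ℝ H]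
    {γ : ℝ} {O : H → H} (hγ0 : 0 < γ) (hO : IsAveraged γ O) (x y : H) :
    ‖O x - O y‖^2 + (1-γ)/γ * ‖(x - O x) - (y - O y)‖^2 ≤ ‖x - y‖^2 := by
  obtain ⟨N, hN, hEq⟩ := hO
  have hdiff : O x - O y = (1-γ) • (x - y) + γ • (N x - N y) := by
    rw [hEq x, hEq y]; rw [smul_sub, smul_sub]; abel
  have hres : (x - O x) - (y - O y) = γ • ((x - y) - (N x - N y)) := by
    rw [hEq x, hEq y, smul_sub, smul_sub, smul_sub]
    rw [sub_smul 1 γ x, sub_smul 1 γ y, one_smul, one_smul]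
    abel
  have hlip : ‖N x - N y‖ ≤ ‖x - y‖ := by
    have := hN.dist_le_mul x y
    simpa [dist_eq_norm] using this
  have h1 : ‖O x - O y‖^2 = (1-γ)*‖x-y‖^2 + γ*‖N x - N y‖^2
      - γ*(1-γ)*‖(x-y) - (N x - N y)‖^2 := by
    rw [hdiff]; exact avg_key_identity γ (x-y) (N x - N y)
  have h2 : ‖(x - O x) - (y - O y)‖^2 = γ^2 * ‖(x-y) - (N x - N y)‖^2 := by
    rw [hres, norm_smul]
    rw [Real.norm_eq_abs, abs_of_pos hγ0]; ring
  have h3 : ‖N x - N y‖^2 ≤ ‖x - y‖^2 :=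
    pow_le_pow_left₀ (norm_nonneg _) hlip 2
  have h4 : (1-γ)/γ * ‖(x - O x) - (y - O y)‖^2 = γ*(1-γ)*‖(x-y) - (N x - N y)‖^2 := by
    rw [h2]; field_simp
  rw [h1, h4]
  nlinarith [hγ0]

lemma avg_of_ineq {H : Type*} [NormedAddCommGroup H] [InnerProductSpace ℝ H]
    {γ : ℝ} {O : H → H} (hγ0 : 0 < γ)
    (h : ∀ x y, ‖O x - O y‖^2 + (1-γ)/γ * ‖(x - O x) - (y - O y)‖^2 ≤ ‖x - y‖^2) :
    IsAveraged γ O := by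
  refine ⟨fun x => (1/γ) • (O x - (1-γ) • x), ?_, ?_⟩
  · apply LipschitzWith.of_dist_le_mul
    intro x y
    set N := fun x => (1/γ) • (O x - (1-γ) • x) with hNdef
    have hEq : ∀ z, O z = (1-γ) • z + γ • N z := by
      intro z
      simp only [hNdef, smul_smul]
      rw [mul_one_div, div_self (ne_of_gt hγ0), one_smul]
      abel
    have hdiff : O x - O y = (1-γ) • (x - y) + γ • (N x - N y) := by
      rw [hEq x, hEq y]; rw [smul_sub, smul_sub]; abel
    have hres : (x - O x) - (y - O y) = γ • ((x - y) - (N x - N y)) := by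
      rw [hEq x, hEq y, smul_sub, smul_sub, smul_sub]
      rw [sub_smul 1 γ x, sub_smul 1 γ y, one_smul, one_smul]
      abel
    have h1 : ‖O x - O y‖^2 = (1-γ)*‖x-y‖^2 + γ*‖N x - N y‖^2
        - γ*(1-γ)*‖(x-y) - (N x - N y)‖^2 := by
      rw [hdiff]; exact avg_key_identity γ (x-y) (N x - N y)
    have h2 : ‖(x - O x) - (y - O y)‖^2 = γ^2 * ‖(x-y) - (N x - N y)‖^2 := by
      rw [hres, norm_smul, Real.norm_eq_abs, abs_of_pos hγ0]; ring
    have h4 : (1-γ)/γ * ‖(x - O x) - (y - O y)‖^2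
        = γ*(1-γ)*‖(x-y) - (N x - N y)‖^2 := by
      rw [h2]; field_simp
    have hxy := h x y
    rw [h1, h4] at hxy
    have hsq : ‖N x - N y‖^2 ≤ ‖x - y‖^2 := by nlinarith [hγ0]
    have : ‖N x - N y‖ ≤ ‖x - y‖ := by
      nlinarith [norm_nonneg (N x - N y), norm_nonneg (x - y)]
    simpa [dist_eq_norm, hNdef, one_div] using this
  · intro x
    simp only [smul_smul]
    rw [mul_one_div, div_self (ne_of_gt hγ0), one_smul]
    abel

lemma harmonic_mean_ineq (l m A B : ℝ) (hl : 0 < l) (hm : 0 < m)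
    (hA : 0 ≤ A) (hB : 0 ≤ B) :
    l * m / (l + m) * (A + B)^2 ≤ l * A^2 + m * B^2 := by
  rw [div_mul_eq_mul_div, div_le_iff₀ (by linarith)]
  nlinarith [sq_nonneg (l*A - m*B)]

theorem composition_averaged
    {H : Type*} [NormedAddCommGroup H] [InnerProductSpace ℝ H]
    (O₁ O₂ : H → H) (γ₁ γ₂ : ℝ)
    (hγ₁ : γ₁ ∈ Set.Ioo (0 : ℝ) 1) (hγ₂ : γ₂ ∈ Set.Ioo (0 : ℝ) 1)
    (h₁ : IsAveraged γ₁ O₁) (h₂ : IsAveraged γ₂ O₂) :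
    IsAveraged ((γ₁ + γ₂ - 2 * γ₁ * γ₂) / (1 - γ₁ * γ₂)) (O₂ ∘ O₁) := by
  obtain ⟨hγ₁0, hγ₁1⟩ := hγ₁
  obtain ⟨hγ₂0, hγ₂1⟩ := hγ₂
  set γ := (γ₁ + γ₂ - 2 * γ₁ * γ₂) / (1 - γ₁ * γ₂) with hγdef
  have hn : 0 < γ₁ + γ₂ - 2 * γ₁ * γ₂ := by nlinarith
  have hd : 0 < 1 - γ₁ * γ₂ := by nlinarith
  have hγ0 : 0 < γ := div_pos hn hd
  apply avg_of_ineq hγ0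
  intro x y
  set l := (1 - γ₁)/γ₁ with hl
  set m := (1 - γ₂)/γ₂ with hm
  have hl0 : 0 < l := div_pos (by linarith) hγ₁0
  have hm0 : 0 < m := div_pos (by linarith) hγ₂0
  have hs : (1 - γ)/γ = l * m / (l + m) := by
    have h1 : γ₁ ≠ 0 := ne_of_gt hγ₁0
    have h2 : γ₂ ≠ 0 := ne_of_gt hγ₂0
    have h3 : (1 : ℝ) - γ₁ * γ₂ ≠ 0 := ne_of_gt hd
    have h5 : l + m ≠ 0 := ne_of_gt (by linarith)
    rw [div_eq_div_iff (ne_of_gt hγ0) h5, hγdef, hl, hm]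
    field_simp
    ring
  have key1 := avg_ineq hγ₁0 h₁ x y
  have key2 := avg_ineq hγ₂0 h₂ (O₁ x) (O₁ y)
  set a := (x - O₁ x) - (y - O₁ y) with ha
  set b := (O₁ x - O₂ (O₁ x)) - (O₁ y - O₂ (O₁ y)) with hb
  have hab : (x - (O₂ ∘ O₁) x) - (y - (O₂ ∘ O₁) y) = a + b := by
    simp only [Function.comp_apply, ha, hb]; abel
  have hharm : (1 - γ)/γ * ‖a + b‖^2 ≤ l * ‖a‖^2 + m * ‖b‖^2 := by
    rw [hs]
    calc l * m / (l + m) * ‖a + b‖^2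
        ≤ l * m / (l + m) * (‖a‖ + ‖b‖)^2 := by
          apply mul_le_mul_of_nonneg_left _ (by positivity)
          exact pow_le_pow_left₀ (norm_nonneg _) (norm_add_le a b) 2
      _ ≤ l * ‖a‖^2 + m * ‖b‖^2 :=
          harmonic_mean_ineq l m _ _ hl0 hm0 (norm_nonneg _) (norm_nonneg _)
  rw [hab]
  simp only [Function.comp_apply] at key2 ⊢
  linarith
end

section
/- Let H be a real Hilbert space, γ ∈ (0,1], and O : H → H a γ-averaged operator with Fix(O) ≠ ∅. Let (γ_t) be a sequence in [0, 1/γ] with Σ_{t≥1} γ_t(1 − γ·γ_t) = +∞. Define x_{t+1} = x_t + γ_t(O(x_t) − x_t) from any x₀ ∈ H. Then ‖O(x_t) − x_t‖ → 0 as t → ∞. -/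
lemma combo_norm_sq {H : Type*} [NormedAddCommGroup H] [InnerProductSpace ℝ H]
    (a b : H) (l : ℝ) :
    ‖(1 - l) • a + l • b‖ ^ 2
      = (1 - l) * ‖a‖ ^ 2 + l * ‖b‖ ^ 2 - l * (1 - l) * ‖a - b‖ ^ 2 := by
  rw [norm_add_sq_real, norm_sub_sq_real]
  simp only [norm_smul, real_inner_smul_left, real_inner_smul_right, Real.norm_eq_abs,
    mul_pow, sq_abs]
  ring

theorem krasnoselskii_mann_residual_tendsto_zero
    {H : Type*} [NormedAddCommGroup H] [InnerProductSpace ℝ H] [CompleteSpace H]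
    (γ : ℝ) (hγ0 : 0 < γ) (hγ1 : γ ≤ 1)
    (O : H → H) (hO : IsAveraged γ O)
    (hfix : ∃ z : H, O z = z)
    (γt : ℕ → ℝ) (hγt : ∀ t, γt t ∈ Set.Icc (0 : ℝ) (1 / γ))
    (hdiv : ¬ Summable (fun t => γt t * (1 - γ * γt t)))
    (x : ℕ → H)
    (hrec : ∀ t, x (t + 1) = x t + γt t • (O (x t) - x t)) :
    Filter.Tendsto (fun t => ‖O (x t) - x t‖) Filter.atTop (nhds 0) := by
  obtain ⟨N, hN, hON⟩ := hO
  obtain ⟨z, hz⟩ := hfix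
  have hNz : N z = z := by
    have h : (1 - γ) • z + γ • N z = z := by rw [← hON]; exact hz
    have h2 : γ • N z = γ • z := by
      linear_combination (norm := module) h
    exact smul_right_injective H (ne_of_gt hγ0) h2
  set l : ℕ → ℝ := fun t => γ * γt t with hl
  have hl0 : ∀ t, 0 ≤ l t := fun t => mul_nonneg hγ0.le (hγt t).1
  have hl1 : ∀ t, l t ≤ 1 := by
    intro t
    have := (hγt t).2
    calc γ * γt t ≤ γ * (1 / γ) := by nlinarith
      _ = 1 := by field_simp
  have hstep : ∀ t, x (t + 1) = (1 - l t) • x t + l t • N (x t) := by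
    intro t
    rw [hrec t, hON]
    simp only [hl]
    module
  set r : ℕ → ℝ := fun t => ‖N (x t) - x t‖ with hr
  have hr0 : ∀ t, 0 ≤ r t := fun t => norm_nonneg _
  -- key decrease
  have key : ∀ t, ‖x (t + 1) - z‖ ^ 2 ≤ ‖x t - z‖ ^ 2 - l t * (1 - l t) * r t ^ 2 := by
    intro t
    have hb : ‖N (x t) - z‖ ≤ ‖x t - z‖ := by
      have := hN.dist_le_mul (x t) z
      simpa [hNz, dist_eq_norm] using this
    have hx : x (t + 1) - z = (1 - l t) • (x t - z) + l t • (N (x t) - z) := by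
      rw [hstep t]; module
    have hdiff : (x t - z) - (N (x t) - z) = x t - N (x t) := by module
    rw [hx, combo_norm_sq, hdiff, norm_sub_rev (x t) (N (x t))]
    have hb2 : ‖N (x t) - z‖ ^ 2 ≤ ‖x t - z‖ ^ 2 := by
      nlinarith [norm_nonneg (N (x t) - z), norm_nonneg (x t - z)]
    have hrt : r t = ‖N (x t) - x t‖ := rfl
    rw [hrt]
    nlinarith [hl0 t, hl1 t]
  set f : ℕ → ℝ := fun t => l t * (1 - l t) * r t ^ 2 with hf
  have hf0 : ∀ t, 0 ≤ f t := fun t =>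
    mul_nonneg (mul_nonneg (hl0 t) (by linarith [hl1 t])) (sq_nonneg _)
  have hsumle : ∀ n, ∑ t ∈ Finset.range n, f t ≤ ‖x 0 - z‖ ^ 2 := by
    intro n
    have h1 : ∑ t ∈ Finset.range n, f t
        ≤ ∑ t ∈ Finset.range n, (‖x t - z‖ ^ 2 - ‖x (t + 1) - z‖ ^ 2) :=
      Finset.sum_le_sum fun t _ => by
        have h := key t
        have hft : f t = l t * (1 - l t) * r t ^ 2 := rfl
        linarith [hft.ge, hft.le]
    rw [Finset.sum_range_sub' (fun t => ‖x t - z‖ ^ 2)] at h1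
    nlinarith [sq_nonneg ‖x n - z‖]
  have hfsum : Summable f := summable_of_sum_range_le hf0 hsumle
  -- residual is nonincreasing
  have hmono : ∀ t, r (t + 1) ≤ r t := by
    intro t
    have hxd : x (t + 1) - x t = l t • (N (x t) - x t) := by rw [hstep t]; module
    have hsplit : N (x (t + 1)) - x (t + 1)
        = (N (x (t + 1)) - N (x t)) + (1 - l t) • (N (x t) - x t) := by
      rw [hstep t]; module
    have hlip : ‖N (x (t + 1)) - N (x t)‖ ≤ ‖x (t + 1) - x t‖ := by
      have := hN.dist_le_mul (x (t + 1)) (x t)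
      simpa [dist_eq_norm] using this
    have hnd : ‖x (t + 1) - x t‖ = l t * r t := by
      rw [hxd, norm_smul, Real.norm_eq_abs, abs_of_nonneg (hl0 t)]
    calc r (t + 1) = ‖(N (x (t + 1)) - N (x t)) + (1 - l t) • (N (x t) - x t)‖ := by
          show ‖N (x (t + 1)) - x (t + 1)‖ = _
          rw [hsplit]
      _ ≤ ‖N (x (t + 1)) - N (x t)‖ + ‖(1 - l t) • (N (x t) - x t)‖ := norm_add_le _ _
      _ = ‖N (x (t + 1)) - N (x t)‖ + (1 - l t) * r t := by
          rw [norm_smul, Real.norm_eq_abs, abs_of_nonneg (by linarith [hl1 t])]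
      _ ≤ l t * r t + (1 - l t) * r t := by
          have := hlip.trans_eq hnd
          linarith
      _ = r t := by ring
  have hanti : Antitone r := antitone_nat_of_succ_le hmono
  have hbdd : BddBelow (Set.range r) := ⟨0, fun y ⟨t, ht⟩ => ht ▸ hr0 t⟩
  have htend : Filter.Tendsto r Filter.atTop (nhds (⨅ t, r t)) :=
    tendsto_atTop_ciInf hanti hbdd
  set L : ℝ := ⨅ t, r t with hLdef
  have hL0 : 0 ≤ L := le_ciInf hr0
  have hLle : ∀ t, L ≤ r t := fun t => ciInf_le hbdd t
  have hL : L = 0 := by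
    by_contra hne
    have hLpos : 0 < L := lt_of_le_of_ne hL0 (Ne.symm hne)
    have hcomp : ∀ t, γ * L ^ 2 * (γt t * (1 - γ * γt t)) ≤ f t := by
      intro t
      have h1 : L ^ 2 ≤ r t ^ 2 := by nlinarith [hLle t, hr0 t]
      have hlt1 : γ * γt t ≤ 1 := hl1 t
      have h2 : 0 ≤ γ * γt t * (1 - γ * γt t) :=
        mul_nonneg (mul_nonneg hγ0.le (hγt t).1) (by linarith)
      have h3 := mul_nonneg h2 (by linarith : (0:ℝ) ≤ r t ^ 2 - L ^ 2)
      have hft : f t = γ * γt t * (1 - γ * γt t) * r t ^ 2 := rfl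
      rw [hft]
      nlinarith [h3]
    have hsum2 : Summable (fun t => γ * L ^ 2 * (γt t * (1 - γ * γt t))) := by
      apply Summable.of_nonneg_of_le _ hcomp hfsum
      intro t
      have hlt1 : γ * γt t ≤ 1 := hl1 t
      exact mul_nonneg (mul_nonneg hγ0.le (sq_nonneg L))
        (mul_nonneg (hγt t).1 (by linarith))
    have hc : (γ * L ^ 2) ≠ 0 := by positivity
    have := hsum2.mul_left (γ * L ^ 2)⁻¹
    simp only [← mul_assoc, inv_mul_cancel₀ hc, one_mul] at this
    exact hdiv this
  have htend0 : Filter.Tendsto r Filter.atTop (nhds 0) := hL ▸ htend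
  have heq : ∀ t, ‖O (x t) - x t‖ = γ * r t := by
    intro t
    have : O (x t) - x t = γ • (N (x t) - x t) := by rw [hON]; module
    rw [this, norm_smul, Real.norm_eq_abs, abs_of_nonneg hγ0.le]
  have := htend0.const_mul γ
  simp only [mul_zero] at this
  exact this.congr fun t => (heq t).symm
end

section
/- The sigmoid function σ(x) = 1/(1 + e^{−x}) on ℝ is (5/8)-averaged, i.e., the function x ↦ x + (8/5)(σ(x) − x) is 1-Lipschitz. -/
theorem sigmoid_is_five_eighths_averaged :
    LipschitzWith 1
      (fun x : ℝ => x + (8 / 5) * (1 / (1 + Real.exp (-x)) - x)) := by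
  have hpos : ∀ x : ℝ, 0 < 1 + Real.exp (-x) := fun x => by positivity
  have hd : ∀ x : ℝ, HasDerivAt (fun x : ℝ => x + (8 / 5) * (1 / (1 + Real.exp (-x)) - x))
      (1 + (8 / 5) * (Real.exp (-x) / (1 + Real.exp (-x)) ^ 2 - 1)) x := by
    intro x
    have h1 : HasDerivAt (fun x : ℝ => 1 + Real.exp (-x)) (-Real.exp (-x)) x := by
      simpa using (((Real.hasDerivAt_exp (-x)).comp x ((hasDerivAt_id x).neg)).const_add 1)
    have h2 : HasDerivAt (fun x : ℝ => 1 / (1 + Real.exp (-x)))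
        (Real.exp (-x) / (1 + Real.exp (-x)) ^ 2) x := by
      have := h1.inv (ne_of_gt (hpos x))
      simpa [one_div, neg_div, Pi.inv_def] using this
    exact (hasDerivAt_id x).add ((h2.sub (hasDerivAt_id x)).const_mul (8 / 5 : ℝ))
  apply lipschitzWith_of_nnnorm_deriv_le (fun x => (hd x).differentiableAt)
  intro x
  rw [(hd x).deriv]
  have hb : Real.exp (-x) / (1 + Real.exp (-x)) ^ 2 ≤ 1 / 4 := by
    rw [div_le_div_iff₀ (by positivity) (by norm_num)]
    nlinarith [sq_nonneg (1 - Real.exp (-x)), Real.exp_pos (-x)]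
  have hb0 : 0 < Real.exp (-x) / (1 + Real.exp (-x)) ^ 2 := by positivity
  have : ‖1 + (8 / 5) * (Real.exp (-x) / (1 + Real.exp (-x)) ^ 2 - 1)‖ ≤ 1 := by
    rw [Real.norm_eq_abs, abs_le]; constructor <;> nlinarith
  exact_mod_cast this
end

section
/- The softsign function r(x) = x/(1+|x|) equals the proximal operator of f, i.e., r(x) = argmin_y ( f(y) + (1/2)(x − y)² ), where f(y) = −|y| − log(1 − |y|) − y²/2 for |y| < 1 and f(y) = +∞ for |y| ≥ 1. -/
lemma softsign_key (x y : ℝ) (hy : |y| < 1) :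
    (-|x / (1 + |x|)| - Real.log (1 - |x / (1 + |x|)|) - (x / (1 + |x|)) ^ 2 / 2)
      + (1/2) * (x - x / (1 + |x|)) ^ 2
    ≤ (-|y| - Real.log (1 - |y|) - y ^ 2 / 2) + (1/2) * (x - y) ^ 2 := by
  have ha : (0:ℝ) < 1 + |x| := by positivity
  set a := 1 + |x| with hadef
  have hra : |x / a| = |x| / a := by rw [abs_div, abs_of_pos ha]
  have h1r : 1 - |x| / a = 1 / a := by rw [hadef]; field_simp; ring
  have hy' : (0:ℝ) < 1 - |y| := by linarith [abs_nonneg y]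
  have hlog : Real.log (1 - |y|) + Real.log a ≤ (1 - |y|) * a - 1 := by
    have := Real.log_le_sub_one_of_pos (mul_pos hy' ha)
    rwa [Real.log_mul (ne_of_gt hy') (ne_of_gt ha)] at this
  have hxy : x * y ≤ |x| * |y| := by
    calc x * y ≤ |x * y| := le_abs_self _
    _ = |x| * |y| := abs_mul x y
  have hL : -(|x| / a) - (x / a) ^ 2 / 2 + (1/2) * (x - x / a) ^ 2
      = -(|x| / a) - x ^ 2 / a + x ^ 2 / 2 := by field_simp; ring
  have hp : |x| / a + x ^ 2 / a = |x| := by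
    field_simp; rw [hadef, ← sq_abs]; ring
  have h3 : a * |y| = |y| + |x| * |y| := by rw [hadef]; ring
  rw [hra, h1r, one_div, Real.log_inv]
  nlinarith [hlog, hxy, hL, hp, h3]

lemma softsign_key_strict (x y : ℝ) (hy : |y| < 1) (hne : y ≠ x / (1 + |x|)) :
    (-|x / (1 + |x|)| - Real.log (1 - |x / (1 + |x|)|) - (x / (1 + |x|)) ^ 2 / 2)
      + (1/2) * (x - x / (1 + |x|)) ^ 2
    < (-|y| - Real.log (1 - |y|) - y ^ 2 / 2) + (1/2) * (x - y) ^ 2 := by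
  have ha : (0:ℝ) < 1 + |x| := by positivity
  set a := 1 + |x| with hadef
  have hra : |x / a| = |x| / a := by rw [abs_div, abs_of_pos ha]
  have h1r : 1 - |x| / a = 1 / a := by rw [hadef]; field_simp; ring
  have hy' : (0:ℝ) < 1 - |y| := by linarith [abs_nonneg y]
  have hL : -(|x| / a) - (x / a) ^ 2 / 2 + (1/2) * (x - x / a) ^ 2
      = -(|x| / a) - x ^ 2 / a + x ^ 2 / 2 := by field_simp; ring
  have hp : |x| / a + x ^ 2 / a = |x| := by
    field_simp; rw [hadef, ← sq_abs]; ring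
  have h3 : a * |y| = |y| + |x| * |y| := by rw [hadef]; ring
  rw [hra, h1r, one_div, Real.log_inv]
  by_cases hcase : |y| = |x| / a
  · have hyr : y = -(x / a) := by
      have habs : |y| = |x / a| := by rw [hcase, hra]
      rcases abs_eq_abs.mp habs with h | h
      · exact absurd h hne
      · exact h
    have hx0 : x ≠ 0 := by
      intro h
      apply hne
      rw [hyr, h]; simp
    have hxy : x * y < |x| * |y| := by
      have e1 : x * y = -(x ^ 2 / a) := by rw [hyr]; ring
      have e2 : |x| * |y| = x ^ 2 / a := by rw [hcase, ← sq_abs]; ring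
      rw [e1, e2]
      have hpos : 0 < x ^ 2 / a := by positivity
      linarith
    have hlog : Real.log (1 - |y|) + Real.log a ≤ (1 - |y|) * a - 1 := by
      have := Real.log_le_sub_one_of_pos (mul_pos hy' ha)
      rwa [Real.log_mul (ne_of_gt hy') (ne_of_gt ha)] at this
    nlinarith [hlog, hxy, hL, hp, h3]
  · have hne1 : (1 - |y|) * a ≠ 1 := by
      intro h
      apply hcase
      field_simp
      nlinarith [h]
    have hlog : Real.log (1 - |y|) + Real.log a < (1 - |y|) * a - 1 := by
      have := Real.log_lt_sub_one_of_pos (mul_pos hy' ha) hne1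
      rwa [Real.log_mul (ne_of_gt hy') (ne_of_gt ha)] at this
    have hxy : x * y ≤ |x| * |y| := by
      calc x * y ≤ |x * y| := le_abs_self _
      _ = |x| * |y| := abs_mul x y
    nlinarith [hlog, hxy, hL, hp, h3]

/-- The convex potential of the softsign activation, with value `⊤` outside `(-1,1)`. -/
noncomputable def softsignPotential (y : ℝ) : EReal :=
  if |y| < 1 then ((-|y| - Real.log (1 - |y|) - y ^ 2 / 2 : ℝ) : EReal) else ⊤

theorem softsign_is_prox (x : ℝ) :
    (∀ y : ℝ,
      softsignPotential (x / (1 + |x|))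
          + (((1 / 2) * (x - x / (1 + |x|)) ^ 2 : ℝ) : EReal)
        ≤ softsignPotential y + (((1 / 2) * (x - y) ^ 2 : ℝ) : EReal)) ∧
    (∀ y : ℝ,
      softsignPotential y + (((1 / 2) * (x - y) ^ 2 : ℝ) : EReal)
          = softsignPotential (x / (1 + |x|))
              + (((1 / 2) * (x - x / (1 + |x|)) ^ 2 : ℝ) : EReal)
        → y = x / (1 + |x|)) := by
  have ha : (0:ℝ) < 1 + |x| := by positivity
  have hr1 : |x / (1 + |x|)| < 1 := by
    rw [abs_div, abs_of_pos ha, div_lt_one ha]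
    linarith
  constructor
  · intro y
    by_cases hy : |y| < 1
    · simp only [softsignPotential, if_pos hr1, if_pos hy, ← EReal.coe_add,
        EReal.coe_le_coe_iff]
      exact softsign_key x y hy
    · simp only [softsignPotential, if_pos hr1, if_neg hy]
      rw [← EReal.coe_add]
      exact le_top.trans_eq (EReal.top_add_coe _).symm
  · intro y heq
    by_cases hy : |y| < 1
    · by_contra hne
      have := softsign_key_strict x y hy hne
      simp only [softsignPotential, if_pos hr1, if_pos hy, ← EReal.coe_add,
        EReal.coe_eq_coe_iff] at heq
      linarith
    · simp only [softsignPotential, if_pos hr1, if_neg hy, ← EReal.coe_add] at heq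
      rw [EReal.top_add_coe] at heq
      exact absurd heq (EReal.top_ne_coe _)
end
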